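/- For every τ in the complex upper half-plane ℍ with |τ| = 1, the modular lambda function satisfies Re(λ(τ)) = 1/2. -/

import Mathlib

open scoped Real

/-- The Jacobi theta function `θ₂`. -/
noncomputable def theta2 (τ : ℂ) : ℂ :=
  ∑' n : ℤ, Complex.exp (Real.pi * Complex.I * τ * ((n : ℂ) + 1 / 2) ^ 2)

/-- The Jacobi theta function `θ₃`. -/
noncomputable def theta3 (τ : ℂ) : ℂ :=
  ∑' n : ℤ, Complex.exp (Real.pi * Complex.I * τ * (n : ℂ) ^ 2)

/-- The modular lambda function. -/
noncomputable def modularLambda (τ : ℂ) : ℂ := theta2 τ ^ 4 / theta3 τ ^ 4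

noncomputable section

/-- term of θ₃ -/
def c3 (τ : ℂ) (n : ℤ) : ℂ := Complex.exp (Real.pi * Complex.I * τ * (n : ℂ) ^ 2)
/-- term of θ₂ -/
def c2 (τ : ℂ) (n : ℤ) : ℂ := Complex.exp (Real.pi * Complex.I * τ * ((n : ℂ) + 1 / 2) ^ 2)
/-- term of θ₄ -/
def c4 (τ : ℂ) (n : ℤ) : ℂ := (-1) ^ n * c3 τ n
/-- term of θ₁-like sum -/
def c1 (τ : ℂ) (n : ℤ) : ℂ := (-1) ^ n * c2 τ n

lemma c3_eq (τ : ℂ) (n : ℤ) : c3 τ n = jacobiTheta₂_term n 0 τ := by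
  simp [c3, jacobiTheta₂_term]
  ring_nf

lemma c2_eq (τ : ℂ) (n : ℤ) :
    c2 τ n = Complex.exp (Real.pi * Complex.I * τ / 4) * jacobiTheta₂_term n (τ / 2) τ := by
  rw [c2, jacobiTheta₂_term, ← Complex.exp_add]
  congr 1
  ring

lemma summable_c3 {τ : ℂ} (hτ : 0 < τ.im) : Summable (c3 τ) := by
  simpa only [← c3_eq] using (summable_jacobiTheta₂_term_iff 0 τ).mpr hτ

lemma summable_c2 {τ : ℂ} (hτ : 0 < τ.im) : Summable (c2 τ) := by
  have := ((summable_jacobiTheta₂_term_iff (τ / 2) τ).mpr hτ).mul_left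
    (Complex.exp (Real.pi * Complex.I * τ / 4))
  simpa only [← c2_eq] using this

lemma summable_c4 {τ : ℂ} (hτ : 0 < τ.im) : Summable (c4 τ) := by
  rw [← summable_norm_iff]
  have : (fun n : ℤ => ‖c4 τ n‖) = fun n => ‖c3 τ n‖ := by
    funext n
    simp [c4, norm_mul, norm_zpow]
  rw [this]
  exact (summable_c3 hτ).norm

lemma summable_c1 {τ : ℂ} (hτ : 0 < τ.im) : Summable (c1 τ) := by
  rw [← summable_norm_iff]
  have : (fun n : ℤ => ‖c1 τ n‖) = fun n => ‖c2 τ n‖ := by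
    funext n
    simp [c1, norm_mul, norm_zpow]
  rw [this]
  exact (summable_c2 hτ).norm


/-- reindexing along the even sublattice -/
lemma tsum_shift_even (F : ℤ × ℤ → ℂ) (h : ∀ m n : ℤ, Odd (m + n) → F (m, n) = 0) :
    ∑' p : ℤ × ℤ, F (p.1 + p.2, p.1 - p.2) = ∑' p : ℤ × ℤ, F p := by
  apply Function.Injective.tsum_eq (g := fun p : ℤ × ℤ => (p.1 + p.2, p.1 - p.2))
  · intro p q hpq
    simp only [Prod.mk.injEq, Prod.ext_iff] at hpq ⊢
    omega
  · rintro ⟨m, n⟩ hx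
    have he : Even (m + n) := by
      by_contra ho
      exact hx (h m n (Int.not_even_iff_odd.mp ho))
    obtain ⟨k, hk⟩ := he
    exact ⟨(k, m - k), by simp only [Prod.mk.injEq]; omega⟩

/-- reindexing along the odd sublattice -/
lemma tsum_shift_odd (F : ℤ × ℤ → ℂ) (h : ∀ m n : ℤ, Even (m + n) → F (m, n) = 0) :
    ∑' p : ℤ × ℤ, F (p.1 + p.2 + 1, p.1 - p.2) = ∑' p : ℤ × ℤ, F p := by
  apply Function.Injective.tsum_eq (g := fun p : ℤ × ℤ => (p.1 + p.2 + 1, p.1 - p.2))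
  · intro p q hpq
    simp only [Prod.mk.injEq, Prod.ext_iff] at hpq ⊢
    omega
  · rintro ⟨m, n⟩ hx
    have ho : Odd (m + n) := by
      by_contra he
      exact hx (h m n (Int.not_odd_iff_even.mp he))
    obtain ⟨k, hk⟩ := ho
    exact ⟨(k, m - k - 1), by simp only [Prod.mk.injEq]; omega⟩

lemma neg_one_zpow_mul_self (n : ℤ) : ((-1 : ℂ)) ^ n * (-1) ^ n = 1 := by
  rcases Int.even_or_odd n with h | h
  · rw [h.neg_one_zpow]; norm_num
  · rw [h.neg_one_zpow]; norm_num

-- term identities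
lemma T1 (τ : ℂ) (a b : ℤ) : c3 τ (a + b) * c3 τ (a - b) = c3 (2 * τ) a * c3 (2 * τ) b := by
  simp only [c3, ← Complex.exp_add]
  congr 1
  push_cast
  ring

lemma T2 (τ : ℂ) (a b : ℤ) : c4 τ (a + b) * c4 τ (a - b) = c3 (2 * τ) a * c3 (2 * τ) b := by
  rw [← T1 τ a b, c4, c4]
  have : ((-1 : ℂ)) ^ (a + b) * (-1) ^ (a - b) = 1 := by
    rw [← zpow_add₀ (by norm_num : (-1 : ℂ) ≠ 0)]
    have : a + b + (a - b) = a + a := by ring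
    rw [this, zpow_add₀ (by norm_num : (-1 : ℂ) ≠ 0)]
    exact neg_one_zpow_mul_self a
  calc (-1 : ℂ) ^ (a + b) * c3 τ (a + b) * ((-1) ^ (a - b) * c3 τ (a - b))
      = ((-1 : ℂ)) ^ (a + b) * (-1) ^ (a - b) * (c3 τ (a + b) * c3 τ (a - b)) := by ring
    _ = c3 τ (a + b) * c3 τ (a - b) := by rw [this, one_mul]

lemma T3 (τ : ℂ) (a b : ℤ) : c3 τ (a + b + 1) * c3 τ (a - b) = c2 (2 * τ) a * c2 (2 * τ) b := by
  simp only [c3, c2, ← Complex.exp_add]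
  congr 1
  push_cast
  ring

lemma T4 (τ : ℂ) (a b : ℤ) : c2 τ (a + b) * c2 τ (a - b) = c2 (2 * τ) a * c3 (2 * τ) b := by
  simp only [c3, c2, ← Complex.exp_add]
  congr 1
  push_cast
  ring

lemma T5 (τ : ℂ) (a b : ℤ) : c1 τ (a + b) * c1 τ (a - b) = c2 (2 * τ) a * c3 (2 * τ) b := by
  rw [← T4 τ a b, c1, c1]
  have : ((-1 : ℂ)) ^ (a + b) * (-1) ^ (a - b) = 1 := by
    rw [← zpow_add₀ (by norm_num : (-1 : ℂ) ≠ 0)]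
    have : a + b + (a - b) = a + a := by ring
    rw [this, zpow_add₀ (by norm_num : (-1 : ℂ) ≠ 0)]
    exact neg_one_zpow_mul_self a
  calc (-1 : ℂ) ^ (a + b) * c2 τ (a + b) * ((-1) ^ (a - b) * c2 τ (a - b))
      = ((-1 : ℂ)) ^ (a + b) * (-1) ^ (a - b) * (c2 τ (a + b) * c2 τ (a - b)) := by ring
    _ = c2 τ (a + b) * c2 τ (a - b) := by rw [this, one_mul]

-- θ₃(τ)θ₄(τ) term identity for the doubling used in nonvanishing
lemma T6 (τ : ℂ) (a b : ℤ) :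
    c3 τ (a + b) * c4 τ (a - b) = c4 (2 * τ) a * c4 (2 * τ) b := by
  rw [c4, c4, c4]
  have h1 : ((-1 : ℂ)) ^ (a - b) = (-1) ^ a * (-1) ^ b := by
    rw [← zpow_add₀ (by norm_num : (-1 : ℂ) ≠ 0)]
    rcases Int.even_or_odd (a - b) with h | h
    · rw [h.neg_one_zpow, (by rcases h with ⟨k, hk⟩; exact ⟨a - k, by omega⟩ : Even (a + b)).neg_one_zpow]
    · rw [h.neg_one_zpow, (by rcases h with ⟨k, hk⟩; exact ⟨a - k - 1, by omega⟩ : Odd (a + b)).neg_one_zpow]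
  rw [h1]
  have := T1 τ a b
  calc c3 τ (a + b) * ((-1 : ℂ) ^ a * (-1) ^ b * c3 τ (a - b))
      = (-1 : ℂ) ^ a * (-1) ^ b * (c3 τ (a + b) * c3 τ (a - b)) := by ring
    _ = (-1 : ℂ) ^ a * (-1) ^ b * (c3 (2 * τ) a * c3 (2 * τ) b) := by rw [this]
    _ = _ := by ring



/-- The Jacobi theta function `θ₄`. -/
def theta4 (τ : ℂ) : ℂ := ∑' n : ℤ, c4 τ n

lemma theta2_eq (τ : ℂ) : theta2 τ = ∑' n : ℤ, c2 τ n := rfl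
lemma theta3_eq (τ : ℂ) : theta3 τ = ∑' n : ℤ, c3 τ n := rfl

lemma two_tau_im {τ : ℂ} (hτ : 0 < τ.im) : 0 < (2 * τ).im := by
  have : (2 * τ).im = 2 * τ.im := by simp [Complex.mul_im]
  rw [this]; linarith

lemma theta1'_eq_zero {τ : ℂ} (hτ : 0 < τ.im) : ∑' n : ℤ, c1 τ n = 0 := by
  have hkey : ∀ n : ℤ, c1 τ (-1 - n) = -c1 τ n := by
    intro n
    have h2 : c2 τ (-1 - n) = c2 τ n := by
      simp only [c2]
      congr 2
      push_cast
      ring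
    rcases Int.even_or_odd n with h | h
    · have h' : Odd (-1 - n) := by
        rcases h with ⟨k, hk⟩; exact ⟨-1 - k, by omega⟩
      rw [c1, c1, h'.neg_one_zpow, h.neg_one_zpow, h2]; ring
    · have h' : Even (-1 - n) := by
        rcases h with ⟨k, hk⟩; exact ⟨-k - 1, by omega⟩
      rw [c1, c1, h'.neg_one_zpow, h.neg_one_zpow, h2]; ring
  have := (Equiv.subLeft (-1 : ℤ)).tsum_eq (c1 τ)
  simp only [Equiv.subLeft_apply] at this
  have h2 : ∑' n : ℤ, c1 τ (-1 - n) = ∑' n : ℤ, c1 τ n := this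
  rw [tsum_congr hkey, tsum_neg] at h2
  linear_combination (-(1:ℂ)/2) * h2


section doubling

variable {τ : ℂ} (hτ : 0 < τ.im)

include hτ

lemma E1 : theta3 τ ^ 2 + theta4 τ ^ 2 = 2 * theta3 (2 * τ) ^ 2 := by
  have s3 := summable_c3 hτ
  have s4 := summable_c4 hτ
  have s3' := summable_c3 (two_tau_im hτ)
  have h3 : theta3 τ ^ 2 = ∑' p : ℤ × ℤ, c3 τ p.1 * c3 τ p.2 := by
    rw [theta3_eq, sq, tsum_mul_tsum_of_summable_norm s3.norm s3.norm]
  have h4 : theta4 τ ^ 2 = ∑' p : ℤ × ℤ, c4 τ p.1 * c4 τ p.2 := by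
    rw [theta4, sq, tsum_mul_tsum_of_summable_norm s4.norm s4.norm]
  rw [h3, h4, ← Summable.tsum_add (summable_mul_of_summable_norm s3.norm s3.norm)
    (summable_mul_of_summable_norm s4.norm s4.norm)]
  rw [← tsum_shift_even (fun p => c3 τ p.1 * c3 τ p.2 + c4 τ p.1 * c4 τ p.2) ?_]
  · have : ∀ p : ℤ × ℤ,
        c3 τ (p.1 + p.2) * c3 τ (p.1 - p.2) + c4 τ (p.1 + p.2) * c4 τ (p.1 - p.2)
          = 2 * (c3 (2 * τ) p.1 * c3 (2 * τ) p.2) := by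
      intro ⟨a, b⟩
      rw [T1, T2]; ring
    rw [tsum_congr this, tsum_mul_left,
      ← tsum_mul_tsum_of_summable_norm s3'.norm s3'.norm, ← theta3_eq, ← sq]
  · intro m n h
    obtain ⟨j, hj⟩ := h
    rcases Int.even_or_odd m with hm | hm <;> rcases Int.even_or_odd n with hn | hn
    · obtain ⟨a, ha⟩ := hm; obtain ⟨b, hb⟩ := hn; omega
    · simp only [c4, hm.neg_one_zpow, hn.neg_one_zpow]; ring
    · simp only [c4, hm.neg_one_zpow, hn.neg_one_zpow]; ring
    · obtain ⟨a, ha⟩ := hm; obtain ⟨b, hb⟩ := hn; omega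

lemma E2 : theta3 τ ^ 2 - theta4 τ ^ 2 = 2 * theta2 (2 * τ) ^ 2 := by
  have s3 := summable_c3 hτ
  have s4 := summable_c4 hτ
  have s2' := summable_c2 (two_tau_im hτ)
  have h3 : theta3 τ ^ 2 = ∑' p : ℤ × ℤ, c3 τ p.1 * c3 τ p.2 := by
    rw [theta3_eq, sq, tsum_mul_tsum_of_summable_norm s3.norm s3.norm]
  have h4 : theta4 τ ^ 2 = ∑' p : ℤ × ℤ, c4 τ p.1 * c4 τ p.2 := by
    rw [theta4, sq, tsum_mul_tsum_of_summable_norm s4.norm s4.norm]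
  rw [h3, h4, ← (summable_mul_of_summable_norm s3.norm s3.norm).tsum_sub
    (summable_mul_of_summable_norm s4.norm s4.norm)]
  rw [← tsum_shift_odd (fun p => c3 τ p.1 * c3 τ p.2 - c4 τ p.1 * c4 τ p.2) ?_]
  · have : ∀ p : ℤ × ℤ,
        c3 τ (p.1 + p.2 + 1) * c3 τ (p.1 - p.2) - c4 τ (p.1 + p.2 + 1) * c4 τ (p.1 - p.2)
          = 2 * (c2 (2 * τ) p.1 * c2 (2 * τ) p.2) := by
      intro ⟨a, b⟩
      have hodd : c4 τ (a + b + 1) * c4 τ (a - b) = -(c3 τ (a + b + 1) * c3 τ (a - b)) := by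
        rcases Int.even_or_odd (a + b + 1) with hm | hm
        · have hn : Odd (a - b) := by
            obtain ⟨k, hk⟩ := hm; exact ⟨a - b - k + k - b - 1 + (b - a + k), by omega⟩
          simp only [c4, hm.neg_one_zpow, hn.neg_one_zpow]; ring
        · have hn : Even (a - b) := by
            obtain ⟨k, hk⟩ := hm; exact ⟨a - k, by omega⟩
          simp only [c4, hm.neg_one_zpow, hn.neg_one_zpow]; ring
      rw [hodd, T3]; ring
    rw [tsum_congr this, tsum_mul_left,
      ← tsum_mul_tsum_of_summable_norm s2'.norm s2'.norm, ← theta2_eq, ← sq]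
  · intro m n h
    obtain ⟨j, hj⟩ := h
    rcases Int.even_or_odd m with hm | hm <;> rcases Int.even_or_odd n with hn | hn
    · simp only [c4, hm.neg_one_zpow, hn.neg_one_zpow]; ring
    · obtain ⟨a, ha⟩ := hm; obtain ⟨b, hb⟩ := hn; omega
    · obtain ⟨a, ha⟩ := hm; obtain ⟨b, hb⟩ := hn; omega
    · simp only [c4, hm.neg_one_zpow, hn.neg_one_zpow]; ring

lemma E3 : theta2 τ ^ 2 = 2 * theta2 (2 * τ) * theta3 (2 * τ) := by
  have s2 := summable_c2 hτ
  have s1 := summable_c1 hτ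
  have s2' := summable_c2 (two_tau_im hτ)
  have s3' := summable_c3 (two_tau_im hτ)
  have h2 : theta2 τ ^ 2 = ∑' p : ℤ × ℤ, c2 τ p.1 * c2 τ p.2 := by
    rw [theta2_eq, sq, tsum_mul_tsum_of_summable_norm s2.norm s2.norm]
  have h1 : (0 : ℂ) = ∑' p : ℤ × ℤ, c1 τ p.1 * c1 τ p.2 := by
    rw [← tsum_mul_tsum_of_summable_norm s1.norm s1.norm, theta1'_eq_zero hτ, zero_mul]
  have key : theta2 τ ^ 2 + 0 = 2 * theta2 (2 * τ) * theta3 (2 * τ) := by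
    rw [h2, h1, ← Summable.tsum_add (summable_mul_of_summable_norm s2.norm s2.norm)
      (summable_mul_of_summable_norm s1.norm s1.norm)]
    rw [← tsum_shift_even (fun p => c2 τ p.1 * c2 τ p.2 + c1 τ p.1 * c1 τ p.2) ?_]
    · have : ∀ p : ℤ × ℤ,
          c2 τ (p.1 + p.2) * c2 τ (p.1 - p.2) + c1 τ (p.1 + p.2) * c1 τ (p.1 - p.2)
            = 2 * (c2 (2 * τ) p.1 * c3 (2 * τ) p.2) := by
        intro ⟨a, b⟩
        rw [T4, T5]; ring
      rw [tsum_congr this, tsum_mul_left,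
        ← tsum_mul_tsum_of_summable_norm s2'.norm s3'.norm, ← theta2_eq, ← theta3_eq]
      ring
    · intro m n h
      obtain ⟨j, hj⟩ := h
      rcases Int.even_or_odd m with hm | hm <;> rcases Int.even_or_odd n with hn | hn
      · obtain ⟨a, ha⟩ := hm; obtain ⟨b, hb⟩ := hn; omega
      · simp only [c1, hm.neg_one_zpow, hn.neg_one_zpow]; ring
      · simp only [c1, hm.neg_one_zpow, hn.neg_one_zpow]; ring
      · obtain ⟨a, ha⟩ := hm; obtain ⟨b, hb⟩ := hn; omega
  linear_combination key

lemma E4 : theta3 τ * theta4 τ = theta4 (2 * τ) ^ 2 := by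
  have s3 := summable_c3 hτ
  have s4 := summable_c4 hτ
  have s4' := summable_c4 (two_tau_im hτ)
  have h34 : theta3 τ * theta4 τ = ∑' p : ℤ × ℤ, c3 τ p.1 * c4 τ p.2 := by
    rw [theta3_eq, theta4, tsum_mul_tsum_of_summable_norm s3.norm s4.norm]
  have h43 : theta4 τ * theta3 τ = ∑' p : ℤ × ℤ, c4 τ p.1 * c3 τ p.2 := by
    rw [theta4, theta3_eq, tsum_mul_tsum_of_summable_norm s4.norm s3.norm]
  have key : theta3 τ * theta4 τ + theta4 τ * theta3 τ = 2 * theta4 (2 * τ) ^ 2 := by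
    rw [h34, h43, ← Summable.tsum_add (summable_mul_of_summable_norm s3.norm s4.norm)
      (summable_mul_of_summable_norm s4.norm s3.norm)]
    rw [← tsum_shift_even (fun p => c3 τ p.1 * c4 τ p.2 + c4 τ p.1 * c3 τ p.2) ?_]
    · have : ∀ p : ℤ × ℤ,
          c3 τ (p.1 + p.2) * c4 τ (p.1 - p.2) + c4 τ (p.1 + p.2) * c3 τ (p.1 - p.2)
            = 2 * (c4 (2 * τ) p.1 * c4 (2 * τ) p.2) := by
        intro ⟨a, b⟩
        have h2 : c4 τ (a + b) * c3 τ (a - b) = c4 (2 * τ) a * c4 (2 * τ) b := by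
          rcases Int.even_or_odd (a + b) with hm | hm
          · have hn : Even (a - b) := by obtain ⟨k, hk⟩ := hm; exact ⟨a - k, by omega⟩
            have hmn := T6 τ a b
            simp only [c4, hm.neg_one_zpow, hn.neg_one_zpow] at hmn ⊢
            linear_combination hmn
          · have hn : Odd (a - b) := by
              obtain ⟨k, hk⟩ := hm; exact ⟨k - b, by omega⟩
            have hmn := T6 τ a b
            simp only [c4, hm.neg_one_zpow, hn.neg_one_zpow] at hmn ⊢
            linear_combination hmn
        rw [T6, h2]; ring
      rw [tsum_congr this, tsum_mul_left,
        ← tsum_mul_tsum_of_summable_norm s4'.norm s4'.norm, ← theta4, ← sq]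
    · intro m n h
      obtain ⟨j, hj⟩ := h
      rcases Int.even_or_odd m with hm | hm <;> rcases Int.even_or_odd n with hn | hn
      · obtain ⟨a, ha⟩ := hm; obtain ⟨b, hb⟩ := hn; omega
      · simp only [c4, hm.neg_one_zpow, hn.neg_one_zpow]; ring
      · simp only [c4, hm.neg_one_zpow, hn.neg_one_zpow]; ring
      · obtain ⟨a, ha⟩ := hm; obtain ⟨b, hb⟩ := hn; omega
  linear_combination key / 2

/-- Jacobi's quartic identity. -/
lemma jacobi_identity : theta2 τ ^ 4 + theta4 τ ^ 4 = theta3 τ ^ 4 := by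
  have h1 := E1 hτ
  have h2 := E2 hτ
  have h3 := E3 hτ
  linear_combination (theta2 τ ^ 2 + 2 * theta2 (2 * τ) * theta3 (2 * τ)) * h3
    - (theta3 τ ^ 2 - theta4 τ ^ 2) * h1 - 2 * theta3 (2 * τ) ^ 2 * h2

end doubling


lemma norm_c3 (τ : ℂ) (n : ℤ) : ‖c3 τ n‖ = Real.exp (-(Real.pi * n ^ 2 * τ.im)) := by
  have harg : (Real.pi : ℂ) * Complex.I * τ * (n : ℂ) ^ 2
      = ((Real.pi * n ^ 2 : ℝ) : ℂ) * (τ * Complex.I) := by push_cast; ring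
  rw [c3, harg, Complex.norm_exp]
  congr 1
  rw [Complex.re_ofReal_mul, Complex.mul_I_re]
  ring

lemma norm_c4 (τ : ℂ) (n : ℤ) : ‖c4 τ n‖ = Real.exp (-(Real.pi * n ^ 2 * τ.im)) := by
  rw [c4, norm_mul, norm_zpow, norm_neg, norm_one, one_zpow, one_mul, norm_c3]

lemma norm_c4_le {τ : ℂ} (h1 : 1 ≤ τ.im) {n : ℤ} (hn : n ≠ 0) :
    ‖c4 τ n‖ ≤ Real.exp (-Real.pi) ^ n.natAbs := by
  rw [norm_c4, ← Real.exp_nat_mul, Real.exp_le_exp]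
  have h2 : (1 : ℝ) ≤ (n.natAbs : ℝ) := by
    have : (1 : ℕ) ≤ n.natAbs := by omega
    exact_mod_cast this
  have habs : (n.natAbs : ℝ) = |(n : ℝ)| := by
    rw [Nat.cast_natAbs]
    push_cast
    ring
  have hsq : ((n.natAbs : ℝ)) ≤ (n : ℝ) ^ 2 := by
    rw [habs]
    nlinarith [_root_.sq_abs ((n : ℝ)), habs ▸ h2]
  have hpos := Real.pi_pos
  have himn : Real.pi * (n.natAbs : ℝ) ≤ Real.pi * (n : ℝ) ^ 2 * τ.im := by
    have step1 : Real.pi * (n.natAbs : ℝ) ≤ Real.pi * (n : ℝ) ^ 2 :=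
      mul_le_mul_of_nonneg_left hsq hpos.le
    refine step1.trans ?_
    nlinarith [mul_nonneg (mul_nonneg hpos.le (sq_nonneg ((n : ℝ)))) (sub_nonneg.mpr h1)]
  linarith

lemma norm_theta4_sub_one_le {τ : ℂ} (h1 : 1 ≤ τ.im) : ‖theta4 τ - 1‖ ≤ 2 / 3 := by
  have hτ : 0 < τ.im := lt_of_lt_of_le one_pos h1
  have s4 := summable_c4 hτ
  set r : ℝ := Real.exp (-Real.pi) with hr
  have hr0 : 0 < r := Real.exp_pos _
  have hr4 : r ≤ 1 / 4 := by
    have h3 : Real.exp (-Real.pi) ≤ Real.exp (-3) :=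
      Real.exp_le_exp.mpr (by linarith [Real.pi_gt_three])
    have h4 : Real.exp (-3 : ℝ) ≤ 1 / 4 := by
      rw [Real.exp_neg]
      have : (4 : ℝ) ≤ Real.exp 3 := by
        have := Real.add_one_le_exp (3 : ℝ)
        linarith
      rw [one_div]
      exact inv_anti₀ (by norm_num) this
    exact h3.trans h4
  have hrlt : r < 1 := by linarith
  -- geometric bound for each half
  have hgeo : Summable (fun n : ℕ => r ^ (n + 1)) :=
    (summable_geometric_of_lt_one hr0.le hrlt).comp_injective (add_left_injective 1)
  have htsum_geo : ∑' n : ℕ, r ^ (n + 1) ≤ 1 / 3 := by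
    have : (fun n : ℕ => r ^ (n + 1)) = fun n : ℕ => r * r ^ n := by
      funext n; rw [pow_succ]; ring
    rw [this, tsum_mul_left, tsum_geometric_of_lt_one hr0.le hrlt]
    rw [mul_inv_le_iff₀ (by linarith)]
    nlinarith
  -- split the sum
  have hpos : Summable (fun n : ℕ => c4 τ n) := s4.comp_injective (fun a b h => by exact_mod_cast h)
  have hneg : Summable (fun n : ℕ => c4 τ (-(n + 1))) :=
    s4.comp_injective (fun a b h => by omega)
  have hsplit : theta4 τ = ∑' n : ℕ, c4 τ n + ∑' n : ℕ, c4 τ (-(n + 1)) := by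
    rw [theta4]
    exact tsum_of_nat_of_neg_add_one hpos hneg
  have hzero : c4 τ 0 = 1 := by
    simp [c4, c3]
  have hpos' : ∑' n : ℕ, c4 τ n = 1 + ∑' n : ℕ, c4 τ (n + 1) := by
    rw [Summable.tsum_eq_zero_add hpos]
    push_cast
    rw [hzero]
  have hbound : ∀ (f : ℕ → ℂ), (∀ n, ‖f n‖ ≤ r ^ (n + 1)) → ‖∑' n : ℕ, f n‖ ≤ 1 / 3 := by
    intro f hf
    have hsf : Summable f := by
      apply Summable.of_norm
      exact hgeo.of_nonneg_of_le (fun n => norm_nonneg _) hf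
    calc ‖∑' n : ℕ, f n‖ ≤ ∑' n : ℕ, ‖f n‖ := norm_tsum_le_tsum_norm hsf.norm
      _ ≤ ∑' n : ℕ, r ^ (n + 1) := Summable.tsum_le_tsum hf hsf.norm hgeo
      _ ≤ 1 / 3 := htsum_geo
  have hA : ‖∑' n : ℕ, c4 τ ((n : ℤ) + 1)‖ ≤ 1 / 3 := by
    apply hbound
    intro n
    have h := norm_c4_le h1 (n := (n : ℤ) + 1) (by omega)
    have he : ((n : ℤ) + 1).natAbs = n + 1 := by omega
    rwa [he] at h
  have hB : ‖∑' n : ℕ, c4 τ (-((n : ℤ) + 1))‖ ≤ 1 / 3 := by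
    apply hbound
    intro n
    have h := norm_c4_le h1 (n := -((n : ℤ) + 1)) (by omega)
    have he : (-((n : ℤ) + 1)).natAbs = n + 1 := by omega
    rwa [he] at h
  have : theta4 τ - 1 = ∑' n : ℕ, c4 τ ((n : ℤ) + 1) + ∑' n : ℕ, c4 τ (-((n : ℤ) + 1)) := by
    rw [hsplit, hpos']
    push_cast
    ring
  rw [this]
  calc ‖_ + _‖ ≤ _ + _ := norm_add_le _ _
    _ ≤ 1 / 3 + 1 / 3 := add_le_add hA hB
    _ = 2 / 3 := by norm_num


lemma theta4_ne_zero_of_one_le {τ : ℂ} (h1 : 1 ≤ τ.im) : theta4 τ ≠ 0 := by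
  intro h
  have := norm_theta4_sub_one_le h1
  rw [h, zero_sub, norm_neg, norm_one] at this
  norm_num at this

lemma theta4_ne_zero {τ : ℂ} (hτ : 0 < τ.im) : theta4 τ ≠ 0 := by
  intro h0
  have hiter : ∀ n : ℕ, theta4 ((2 : ℂ) ^ n * τ) = 0 := by
    intro n
    induction n with
    | zero => simpa using h0
    | succ n ih =>
      have him : 0 < ((2 : ℂ) ^ n * τ).im := by
        have : ((2 : ℂ) ^ n * τ).im = (2 : ℝ) ^ n * τ.im := by
          rw [show ((2 : ℂ) ^ n) = (((2 : ℝ) ^ n : ℝ) : ℂ) by push_cast; ring,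
            Complex.im_ofReal_mul]
        rw [this]
        positivity
      have hE4 := E4 him
      rw [ih, mul_zero] at hE4
      have : theta4 (2 * ((2 : ℂ) ^ n * τ)) = 0 := by
        have := hE4.symm
        exact pow_eq_zero_iff (by norm_num) |>.mp this
      rw [show (2 : ℂ) * ((2 : ℂ) ^ n * τ) = (2 : ℂ) ^ (n + 1) * τ by ring] at this
      exact this
  obtain ⟨n, hn⟩ := pow_unbounded_of_one_lt (1 / τ.im) (one_lt_two (α := ℝ))
  have him : 1 ≤ ((2 : ℂ) ^ n * τ).im := by
    have he : ((2 : ℂ) ^ n * τ).im = (2 : ℝ) ^ n * τ.im := by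
      rw [show ((2 : ℂ) ^ n) = (((2 : ℝ) ^ n : ℝ) : ℂ) by push_cast; ring,
        Complex.im_ofReal_mul]
    rw [he]
    rw [div_lt_iff₀ hτ] at hn
    nlinarith
  exact theta4_ne_zero_of_one_le him (hiter n)

lemma theta3_ne_zero {τ : ℂ} (hτ : 0 < τ.im) : theta3 τ ≠ 0 := by
  intro h0
  have hE4 := E4 hτ
  rw [h0, zero_mul] at hE4
  exact theta4_ne_zero (two_tau_im hτ) (pow_eq_zero_iff (two_ne_zero)|>.mp hE4.symm)


open Complex in
lemma exp_pi_mul_I_int (n : ℤ) : Complex.exp ((Real.pi : ℂ) * Complex.I * n) = (-1 : ℂ) ^ n := by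
  rw [show ((Real.pi : ℂ) * Complex.I * n) = (n : ℂ) * ((Real.pi : ℂ) * Complex.I) by ring,
    Complex.exp_int_mul, Complex.exp_pi_mul_I]

lemma c4_eq_term (τ : ℂ) (n : ℤ) : c4 τ n = jacobiTheta₂_term n (1 / 2 : ℂ) τ := by
  rw [c4, ← exp_pi_mul_I_int, jacobiTheta₂_term, c3, ← Complex.exp_add]
  congr 1
  ring

lemma theta3_jac (τ : ℂ) : theta3 τ = jacobiTheta₂ 0 τ := tsum_congr (c3_eq τ)

lemma theta4_jac (τ : ℂ) : theta4 τ = jacobiTheta₂ (1 / 2 : ℂ) τ := tsum_congr (c4_eq_term τ)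

lemma theta2_jac (τ : ℂ) :
    theta2 τ = Complex.exp ((Real.pi : ℂ) * Complex.I * τ / 4) * jacobiTheta₂ (τ / 2) τ := by
  rw [show theta2 τ = ∑' n : ℤ, c2 τ n from rfl, tsum_congr (c2_eq τ), tsum_mul_left,
    jacobiTheta₂]

lemma cpow_half_ne_zero {τ : ℂ} (hτ0 : τ ≠ 0) : (-Complex.I * τ) ^ (1 / 2 : ℂ) ≠ 0 := by
  rw [Ne, Complex.cpow_eq_zero_iff]
  push_neg
  intro h
  exact absurd h (mul_ne_zero (neg_ne_zero.mpr Complex.I_ne_zero) hτ0)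

lemma theta3_S {τ : ℂ} (hτ : 0 < τ.im) :
    theta3 (-1 / τ) = (-Complex.I * τ) ^ (1 / 2 : ℂ) * theta3 τ := by
  have hτ0 : τ ≠ 0 := fun h => by simp [h] at hτ
  have hc := cpow_half_ne_zero hτ0
  have hFE := jacobiTheta₂_functional_equation 0 τ
  simp only [zero_div, zero_pow, ne_eq, OfNat.ofNat_ne_zero, not_false_eq_true, zero_pow,
    mul_zero, zero_div, Complex.exp_zero, mul_one] at hFE
  rw [theta3_jac, theta3_jac]
  field_simp at hFE ⊢
  linear_combination -hFE

lemma theta2_S {τ : ℂ} (hτ : 0 < τ.im) :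
    theta2 (-1 / τ) = (-Complex.I * τ) ^ (1 / 2 : ℂ) * theta4 τ := by
  have hτ0 : τ ≠ 0 := fun h => by simp [h] at hτ
  have hc := cpow_half_ne_zero hτ0
  have hFE := jacobiTheta₂_functional_equation (1 / 2) τ
  have h2 : theta2 (-1 / τ) = Complex.exp ((Real.pi : ℂ) * Complex.I * (-1 / τ) / 4) *
      jacobiTheta₂ (1 / 2 / τ) (-1 / τ) := by
    rw [theta2_jac, show ((-1 / τ : ℂ)) / 2 = -(1 / 2 / τ) by ring, jacobiTheta₂_neg_left]
  rw [h2, theta4_jac, hFE]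
  have hF : Complex.exp ((Real.pi : ℂ) * Complex.I * (-1 / τ) / 4)
      = Complex.exp (-(Real.pi : ℂ) * Complex.I * (1 / 2 : ℂ) ^ 2 / τ) := by
    congr 1
    field_simp
    ring
  rw [hF]
  field_simp

open scoped ComplexConjugate in
lemma theta3_conj (τ : ℂ) : conj (theta3 τ) = theta3 (-conj τ) := by
  rw [theta3_jac, theta3_jac, jacobiTheta₂_conj, map_zero]

open scoped ComplexConjugate in
lemma theta2_conj (τ : ℂ) : conj (theta2 τ) = theta2 (-conj τ) := by
  rw [show theta2 τ = ∑' n : ℤ, c2 τ n from rfl,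
    show theta2 (-conj τ) = ∑' n : ℤ, c2 (-conj τ) n from rfl, Complex.conj_tsum]
  congr 1 with n
  rw [c2, c2, ← Complex.exp_conj]
  congr 1
  simp only [map_mul, map_add, map_pow, Complex.conj_ofReal, Complex.conj_I, map_intCast,
    map_div₀, map_one, map_ofNat]
  ring


open scoped ComplexConjugate in
theorem stmt10 (τ : ℂ) (hτ : 0 < τ.im) (habs : ‖τ‖ = 1) :
    (modularLambda τ).re = 1 / 2 := by
  have hτ0 : τ ≠ 0 := fun h => by simp [h] at hτ
  have hconj : -conj τ = -1 / τ := by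
    have hn : Complex.normSq τ = 1 := by
      rw [← Complex.sq_norm, habs]; norm_num
    have hmul : τ * conj τ = 1 := by
      rw [Complex.mul_conj, hn, Complex.ofReal_one]
    have hinv : conj τ = 1 / τ := by
      field_simp
      linear_combination hmul
    rw [hinv]
    ring
  have h2S := theta2_S hτ
  have h3S := theta3_S hτ
  have hc4 : ((-Complex.I * τ) ^ (1 / 2 : ℂ)) ^ 4 ≠ 0 :=
    pow_ne_zero _ (cpow_half_ne_zero hτ0)
  have h3 : theta3 τ ≠ 0 := theta3_ne_zero hτ
  have key : conj (modularLambda τ) = theta4 τ ^ 4 / theta3 τ ^ 4 := by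
    rw [modularLambda, map_div₀, map_pow, map_pow, theta2_conj, theta3_conj, hconj,
      h2S, h3S, mul_pow, mul_pow, mul_div_mul_left _ _ hc4]
  have hsum : modularLambda τ + conj (modularLambda τ) = 1 := by
    rw [key, modularLambda, ← add_div, jacobi_identity hτ, div_self (pow_ne_zero 4 h3)]
  have hre := Complex.add_conj (modularLambda τ)
  rw [hsum] at hre
  have : (2 : ℝ) * (modularLambda τ).re = 1 := by exact_mod_cast hre.symm
  linarith

end
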